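/- If x_1, ..., x_k are real-valued random variables with E[x_i] = 0 and E[x_i^2] = σ_i^2 for each i, then Pr[max_i x_i ≥ 1] ≤ Σ_{i=1}^k σ_i^2 / (1 + σ_i^2). -/

import Mathlib

open MeasureTheory Finset

lemma cantelli_aux
    {Ω : Type*} [MeasurableSpace Ω] (μ : Measure Ω) [IsProbabilityMeasure μ]
    (X : Ω → ℝ) (s : ℝ)
    (hmeas : Measurable X)
    (hint : Integrable X μ)
    (hint2 : Integrable (fun ω => (X ω) ^ 2) μ)
    (hmean : ∫ ω, X ω ∂μ = 0)
    (hvar : ∫ ω, (X ω) ^ 2 ∂μ = s) :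
    μ {ω | 1 ≤ X ω} ≤ ENNReal.ofReal (s / (1 + s)) := by
  have hs : 0 ≤ s := by
    rw [← hvar]; exact integral_nonneg fun ω => sq_nonneg _
  have h1s : (0:ℝ) < 1 + s := by linarith
  set A : Set Ω := {ω | 1 ≤ X ω} with hA
  have hAmeas : MeasurableSet A := measurableSet_le measurable_const hmeas
  have hgint : Integrable (fun ω => ((X ω + s) / (1 + s)) ^ 2) μ := by
    have : (fun ω => ((X ω + s) / (1 + s)) ^ 2)
        = fun ω => (1/(1+s))^2 * ((X ω)^2 + (2*s) * X ω + s^2) := by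
      funext ω; field_simp; ring
    rw [this]
    exact (((hint2.add (hint.const_mul (2*s))).add (integrable_const _)).const_mul _)
  have hind : ∀ ω, A.indicator (fun _ => (1:ℝ)) ω ≤ ((X ω + s) / (1 + s)) ^ 2 := by
    intro ω
    by_cases hω : ω ∈ A
    · rw [Set.indicator_of_mem hω]
      have hX : 1 ≤ X ω := hω
      have : 1 ≤ (X ω + s) / (1 + s) := by
        rw [le_div_iff₀ h1s]; linarith
      nlinarith
    · rw [Set.indicator_of_notMem hω]; positivity
  have hintegral : ∫ ω, ((X ω + s) / (1 + s)) ^ 2 ∂μ = s / (1 + s) := by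
    have : (fun ω => ((X ω + s) / (1 + s)) ^ 2)
        = fun ω => (1/(1+s))^2 * ((X ω)^2 + (2*s) * X ω + s^2) := by
      funext ω; field_simp; ring
    rw [this, integral_const_mul]
    have e1 : ∫ ω, (X ω ^ 2 + 2*s*X ω + s^2) ∂μ = s + s^2 := by
      have h2 : Integrable (fun ω => X ω ^ 2 + 2*s*X ω) μ := hint2.add (hint.const_mul (2*s))
      rw [integral_add h2 (integrable_const _), integral_add hint2 (hint.const_mul (2*s)),
        integral_const, hvar]
      have h3 : ∫ ω, 2*s*X ω ∂μ = 2*s*∫ ω, X ω ∂μ := integral_const_mul _ _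
      simp [h3, hmean]
    rw [e1]
    field_simp
  have hmono : (μ A).toReal ≤ s / (1 + s) := by
    have h1 : ∫ ω, A.indicator (fun _ => (1:ℝ)) ω ∂μ = (μ A).toReal := by
      rw [integral_indicator_const _ hAmeas]; simp [Measure.real]
    rw [← h1, ← hintegral]
    exact integral_mono (Integrable.indicator (integrable_const _) hAmeas) hgint hind
  calc μ A = ENNReal.ofReal ((μ A).toReal) := (ENNReal.ofReal_toReal (measure_ne_top μ A)).symm
    _ ≤ ENNReal.ofReal (s / (1 + s)) := ENNReal.ofReal_le_ofReal hmono

theorem marshall_olkin_one_sided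
    {Ω : Type*} [MeasurableSpace Ω] (μ : Measure Ω) [IsProbabilityMeasure μ]
    (k : ℕ) (X : Fin k → Ω → ℝ) (σ : Fin k → ℝ)
    (hmeas : ∀ i, Measurable (X i))
    (hint : ∀ i, Integrable (X i) μ)
    (hint2 : ∀ i, Integrable (fun ω => (X i ω) ^ 2) μ)
    (hmean : ∀ i, ∫ ω, X i ω ∂μ = 0)
    (hvar : ∀ i, ∫ ω, (X i ω) ^ 2 ∂μ = (σ i) ^ 2) :
    μ {ω | ∃ i, 1 ≤ X i ω} ≤ ENNReal.ofReal (∑ i, (σ i) ^ 2 / (1 + (σ i) ^ 2)) := by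
  have hset : {ω | ∃ i, 1 ≤ X i ω} = ⋃ i, {ω | 1 ≤ X i ω} := by
    ext ω; simp
  rw [hset]
  calc μ (⋃ i, {ω | 1 ≤ X i ω}) ≤ ∑ i, μ {ω | 1 ≤ X i ω} :=
        measure_iUnion_fintype_le μ _
    _ ≤ ∑ i, ENNReal.ofReal ((σ i)^2 / (1 + (σ i)^2)) := by
        apply Finset.sum_le_sum
        intro i _
        exact cantelli_aux μ (X i) ((σ i)^2) (hmeas i) (hint i) (hint2 i) (hmean i) (hvar i)
    _ = ENNReal.ofReal (∑ i, (σ i) ^ 2 / (1 + (σ i) ^ 2)) := by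
        rw [← ENNReal.ofReal_sum_of_nonneg]
        intro i _
        positivity
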